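/- Let P, Q, R, S be a pqrs-quad. Then the constraint Q(iπ/2) − μ·P(iπ/2) + R(iπ/2) = 0 holds if and only if the A-relations hold, i.e. for every w ∈ ℂ: P(iπ−w) = −e^{iℓπ}·e^{2(1−ℓ)w}·P(w); Q(iπ−w) = e^{iℓπ}·e^{−2ℓw}·(μ·P(w) + e^{2w}·R(w)); R(iπ−w) = e^{iℓπ}·e^{2(1−ℓ)w}·(μ·e^{2w}·P(w) + Q(w)); S(iπ−w) = −e^{iℓπ}·e^{−2ℓw}·(μ·(μ·e^{2w}·P(w) + Q(w)) + e^{2w}·(μ·e^{2w}·R(w) + S(w))). (The constraint is q(i) − μ·p(i) + r(i) = 0 at z = i, since e^{iπ/2} = i.) -/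

import Mathlib

open Set Matrix

/-- A entire solution of a linear ODE system (4×4, complex) vanishing at one point
vanishes everywhere. -/
lemma quad_vanish (g1 g2 g3 g4 : ℂ → ℂ) (M : ℂ → Matrix (Fin 4) (Fin 4) ℂ)
    (hM : Continuous M)
    (h1 : ∀ w, HasDerivAt g1
      (M w 0 0 * g1 w + M w 0 1 * g2 w + M w 0 2 * g3 w + M w 0 3 * g4 w) w)
    (h2 : ∀ w, HasDerivAt g2
      (M w 1 0 * g1 w + M w 1 1 * g2 w + M w 1 2 * g3 w + M w 1 3 * g4 w) w)
    (h3 : ∀ w, HasDerivAt g3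
      (M w 2 0 * g1 w + M w 2 1 * g2 w + M w 2 2 * g3 w + M w 2 3 * g4 w) w)
    (h4 : ∀ w, HasDerivAt g4
      (M w 3 0 * g1 w + M w 3 1 * g2 w + M w 3 2 * g3 w + M w 3 3 * g4 w) w)
    (w₀ : ℂ) (e1 : g1 w₀ = 0) (e2 : g2 w₀ = 0) (e3 : g3 w₀ = 0) (e4 : g4 w₀ = 0)
    (w : ℂ) : g1 w = 0 ∧ g2 w = 0 ∧ g3 w = 0 ∧ g4 w = 0 := by
  classical
  set E := EuclideanSpace ℂ (Fin 4)
  set F : ℂ → E := fun z => (WithLp.equiv 2 (Fin 4 → ℂ)).symm ![g1 z, g2 z, g3 z, g4 z] with hFdef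
  set Aop : ℂ → (E →L[ℂ] E) := fun z => Matrix.toEuclideanCLM (𝕜 := ℂ) (M z) with hAdef
  have hlinmap : Continuous fun m : Matrix (Fin 4) (Fin 4) ℂ =>
      (Matrix.toEuclideanCLM (𝕜 := ℂ) m : E →L[ℂ] E) := by
    exact LinearMap.continuous_of_finiteDimensional
      ({ toFun := fun m => Matrix.toEuclideanCLM (𝕜 := ℂ) m
         map_add' := fun a b => by simp
         map_smul' := fun c a => by simp } : Matrix (Fin 4) (Fin 4) ℂ →ₗ[ℂ] (E →L[ℂ] E))
  have hAcont : Continuous Aop := hlinmap.comp hM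
  have hF : ∀ z, HasDerivAt F (Aop z (F z)) z := by
    intro z
    have hvec : HasDerivAt (fun z => ![g1 z, g2 z, g3 z, g4 z] : ℂ → Fin 4 → ℂ)
        (M z *ᵥ ![g1 z, g2 z, g3 z, g4 z]) z := by
      rw [hasDerivAt_pi]
      intro i
      fin_cases i <;>
        simp only [Matrix.mulVec, dotProduct, Fin.sum_univ_four, Matrix.cons_val_zero,
          Matrix.cons_val_one, Matrix.head_cons, Matrix.cons_val_two, Matrix.tail_cons,
          Matrix.cons_val_three]
      · exact h1 z
      · exact h2 z
      · exact h3 z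
      · exact h4 z
    have := ((PiLp.continuousLinearEquiv 2 ℂ (fun _ : Fin 4 => ℂ)).symm :
        (Fin 4 → ℂ) →L[ℂ] E).hasFDerivAt.comp_hasDerivAt z hvec
    simp [Function.comp_def] at this
    exact this
  have hFcont : Continuous F :=
    continuous_iff_continuousAt.2 fun z => (hF z).continuousAt
  -- show F w = 0
  have key : F w = 0 := by
    set γ : ℝ → ℂ := fun t => w₀ + t • (w - w₀) with hγdef
    have hγcont : Continuous γ := by fun_prop
    have hγ' : ∀ t : ℝ, HasDerivAt γ (w - w₀) t := by
      intro t
      have := ((hasDerivAt_id t).smul_const (w - w₀)).const_add w₀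
      simpa [hγdef] using this
    obtain ⟨C, hC⟩ := (isCompact_Icc (a := (0:ℝ)) (b := 1)).exists_bound_of_continuousOn
      ((hAcont.comp hγcont).continuousOn)
    set τ : ℝ → ℝ := fun t => max 0 (min 1 t) with hτdef
    have hτmem : ∀ t, τ t ∈ Icc (0:ℝ) 1 := fun t =>
      ⟨le_max_left _ _, max_le (by norm_num) (min_le_left _ _)⟩
    have hτeq : ∀ t ∈ Icc (0:ℝ) 1, τ t = t := by
      intro t ht
      simp only [hτdef]
      rw [min_eq_right ht.2, max_eq_right ht.1]
    set K : NNReal := ‖w - w₀‖₊ * Real.toNNReal C with hKdef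
    set v : ℝ → E → E := fun t x => ((w - w₀) • Aop (γ (τ t))) x with hvdef
    have hv : ∀ t, LipschitzOnWith K (v t) univ := by
      intro t
      apply LipschitzWith.lipschitzOnWith
      apply ((w - w₀) • Aop (γ (τ t))).lipschitz.weaken
      have hb : ‖(w - w₀) • Aop (γ (τ t))‖ ≤ ‖w - w₀‖ * max C 0 := by
        refine (norm_smul_le (w - w₀) (Aop (γ (τ t)))).trans ?_
        refine mul_le_mul_of_nonneg_left ?_ (norm_nonneg _)
        exact le_max_of_le_left (hC (τ t) (hτmem t))
      rw [← NNReal.coe_le_coe]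
      refine hb.trans ?_
      rw [hKdef]
      push_cast
      rw [Real.coe_toNNReal']
    have heq : EqOn (F ∘ γ) (fun _ => (0 : E)) (Icc 0 1) := by
      apply ODE_solution_unique_of_mem_Icc_right (v := v) (s := fun _ => (univ : Set E)) (fun t _ => hv t)
      · exact (hFcont.comp hγcont).continuousOn
      · intro t ht
        have hD : HasDerivAt (F ∘ γ) ((w - w₀) • (Aop (γ t) (F (γ t)))) t :=
          (hF (γ t)).scomp t (hγ' t)
        have : v t ((F ∘ γ) t) = (w - w₀) • (Aop (γ t) (F (γ t))) := by
          simp [hvdef, hτeq t (Ico_subset_Icc_self ht)]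
        rw [this]
        exact hD.hasDerivWithinAt
      · intro t _; trivial
      · exact continuousOn_const
      · intro t ht
        have : v t (0 : E) = 0 := by simp [hvdef]
        rw [this]
        exact (hasDerivAt_const t (0:E)).hasDerivWithinAt
      · intro t _; trivial
      · show F (γ 0) = 0
        have hγ0 : γ 0 = w₀ := by simp [hγdef]
        rw [hγ0]
        have hz : (![g1 w₀, g2 w₀, g3 w₀, g4 w₀] : Fin 4 → ℂ) = 0 := by
          ext i; fin_cases i <;> simp [e1, e2, e3, e4]
        show (WithLp.equiv 2 (Fin 4 → ℂ)).symm ![g1 w₀, g2 w₀, g3 w₀, g4 w₀] = 0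
        rw [hz]
        rfl
    have := heq (right_mem_Icc.2 zero_le_one)
    simpa [hγdef] using this
  have : (![g1 w, g2 w, g3 w, g4 w] : Fin 4 → ℂ) = 0 := by
    have := congrArg (WithLp.equiv 2 (Fin 4 → ℂ)) key
    simpa [hFdef] using this
  refine ⟨?_, ?_, ?_, ?_⟩
  · simpa using congrFun this 0
  · simpa using congrFun this 1
  · simpa using congrFun this 2
  · simpa using congrFun this 3
noncomputable def ipi : ℂ := (Real.pi : ℂ) * Complex.I

set_option maxHeartbeats 2000000 in
theorem statement_0 (ell lam mu : ℂ) (P Q R S : ℂ → ℂ)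
    (hP : Differentiable ℂ P) (hQ : Differentiable ℂ Q)
    (hR : Differentiable ℂ R) (hS : Differentiable ℂ S)
    (hsys1 : ∀ w : ℂ, Complex.exp w * deriv P w =
      (mu + (ell - 1) * Complex.exp w) * P w - Q w + Complex.exp (2 * w) * R w)
    (hsys2 : ∀ w : ℂ, deriv Q w =
      Complex.exp w * ((lam - (ell + 1) * mu * Complex.exp w) * P w + mu * Q w + S w))
    (hsys3 : ∀ w : ℂ, Complex.exp w * deriv R w =
      -(lam + mu ^ 2) * P w + Complex.exp w * (2 * (ell - 1) - mu * Complex.exp w) * R w - S w)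
    (hsys4 : ∀ w : ℂ, Complex.exp w * deriv S w =
      -(lam + mu ^ 2) * Q w + Complex.exp (2 * w) * (lam - (ell + 1) * mu * Complex.exp w) * R w
        + ((ell - 1) * Complex.exp w - mu) * S w) :
    (Q (ipi / 2) - mu * P (ipi / 2) + R (ipi / 2) = 0) ↔
    (∀ w : ℂ,
      P (ipi - w) = -Complex.exp (Complex.I * ell * (Real.pi : ℂ)) *
        Complex.exp (2 * (1 - ell) * w) * P w ∧
      Q (ipi - w) = Complex.exp (Complex.I * ell * (Real.pi : ℂ)) *
        Complex.exp (-(2 * ell) * w) * (mu * P w + Complex.exp (2 * w) * R w) ∧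
      R (ipi - w) = Complex.exp (Complex.I * ell * (Real.pi : ℂ)) *
        Complex.exp (2 * (1 - ell) * w) * (mu * Complex.exp (2 * w) * P w + Q w) ∧
      S (ipi - w) = -Complex.exp (Complex.I * ell * (Real.pi : ℂ)) *
        Complex.exp (-(2 * ell) * w) *
        (mu * (mu * Complex.exp (2 * w) * P w + Q w) +
          Complex.exp (2 * w) * (mu * Complex.exp (2 * w) * R w + S w))) := by
  have hipi : Complex.exp ipi = -1 := by rw [ipi]; exact Complex.exp_pi_mul_I
  set c : ℂ := Complex.exp (Complex.I * ell * (Real.pi : ℂ)) with hcdef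
  -- special values at ipi/2
  have hfix : ipi - ipi / 2 = ipi / 2 := by ring
  have hdub : (2 : ℂ) * (ipi / 2) = ipi := by ring
  have h1 : c * Complex.exp (-(2 * ell) * (ipi / 2)) = 1 := by
    rw [hcdef, ← Complex.exp_add,
      show Complex.I * ell * (Real.pi : ℂ) + -(2 * ell) * (ipi / 2) = 0 by rw [ipi]; ring,
      Complex.exp_zero]
  have hm1 : c * Complex.exp (2 * (1 - ell) * (ipi / 2)) = -1 := by
    rw [hcdef, ← Complex.exp_add,
      show Complex.I * ell * (Real.pi : ℂ) + 2 * (1 - ell) * (ipi / 2) = ipi by rw [ipi]; ring,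
      hipi]
  constructor
  · -- forward: constraint implies the A-relations
    intro hcon
    -- derivative facts for P Q R S
    have dP : ∀ z : ℂ, HasDerivAt P (Complex.exp (-z) *
        ((mu + (ell - 1) * Complex.exp z) * P z - Q z + Complex.exp (2 * z) * R z)) z := by
      intro z
      refine (hP z).hasDerivAt.congr_deriv ?_
      have hne := Complex.exp_ne_zero z
      rw [Complex.exp_neg]
      field_simp
      linear_combination hsys1 z
    have dQ : ∀ z : ℂ, HasDerivAt Q (Complex.exp z *
        ((lam - (ell + 1) * mu * Complex.exp z) * P z + mu * Q z + S z)) z := by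
      intro z
      exact (hQ z).hasDerivAt.congr_deriv (hsys2 z)
    have dR : ∀ z : ℂ, HasDerivAt R (Complex.exp (-z) *
        (-(lam + mu ^ 2) * P z + Complex.exp z * (2 * (ell - 1) - mu * Complex.exp z) * R z
          - S z)) z := by
      intro z
      refine (hR z).hasDerivAt.congr_deriv ?_
      have hne := Complex.exp_ne_zero z
      rw [Complex.exp_neg]
      field_simp
      linear_combination hsys3 z
    have dS : ∀ z : ℂ, HasDerivAt S (Complex.exp (-z) *
        (-(lam + mu ^ 2) * Q z + Complex.exp (2 * z) * (lam - (ell + 1) * mu * Complex.exp z)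
          * R z + ((ell - 1) * Complex.exp z - mu) * S z)) z := by
      intro z
      refine (hS z).hasDerivAt.congr_deriv ?_
      have hne := Complex.exp_ne_zero z
      rw [Complex.exp_neg]
      field_simp
      linear_combination hsys4 z
    -- derivative facts for the reflected functions
    have dPσ : ∀ z : ℂ, HasDerivAt (fun z => P (ipi - z)) (-(Complex.exp (-(ipi - z)) *
        ((mu + (ell - 1) * Complex.exp (ipi - z)) * P (ipi - z) - Q (ipi - z)
          + Complex.exp (2 * (ipi - z)) * R (ipi - z)))) z := by
      intro z
      have h := (dP (ipi - z)).comp z ((hasDerivAt_id z).const_sub ipi)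
      exact h.congr_deriv (by ring)
    have dQσ : ∀ z : ℂ, HasDerivAt (fun z => Q (ipi - z)) (-(Complex.exp (ipi - z) *
        ((lam - (ell + 1) * mu * Complex.exp (ipi - z)) * P (ipi - z) + mu * Q (ipi - z)
          + S (ipi - z)))) z := by
      intro z
      have h := (dQ (ipi - z)).comp z ((hasDerivAt_id z).const_sub ipi)
      exact h.congr_deriv (by ring)
    have dRσ : ∀ z : ℂ, HasDerivAt (fun z => R (ipi - z)) (-(Complex.exp (-(ipi - z)) *
        (-(lam + mu ^ 2) * P (ipi - z) + Complex.exp (ipi - z) *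
          (2 * (ell - 1) - mu * Complex.exp (ipi - z)) * R (ipi - z) - S (ipi - z)))) z := by
      intro z
      have h := (dR (ipi - z)).comp z ((hasDerivAt_id z).const_sub ipi)
      exact h.congr_deriv (by ring)
    have dSσ : ∀ z : ℂ, HasDerivAt (fun z => S (ipi - z)) (-(Complex.exp (-(ipi - z)) *
        (-(lam + mu ^ 2) * Q (ipi - z) + Complex.exp (2 * (ipi - z)) *
          (lam - (ell + 1) * mu * Complex.exp (ipi - z)) * R (ipi - z)
          + ((ell - 1) * Complex.exp (ipi - z) - mu) * S (ipi - z)))) z := by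
      intro z
      have h := (dS (ipi - z)).comp z ((hasDerivAt_id z).const_sub ipi)
      exact h.congr_deriv (by ring)
    have dE : ∀ (a z : ℂ), HasDerivAt (fun z => Complex.exp (a * z))
        (a * Complex.exp (a * z)) z := by
      intro a z
      have := ((hasDerivAt_id z).const_mul a).cexp
      simpa [mul_comm] using this
    -- exp rewriting lemmas
    have hXY : ∀ z : ℂ, Complex.exp z * Complex.exp (-z) = 1 := by
      intro z; rw [← Complex.exp_add]; simp
    have E1 : ∀ z : ℂ, Complex.exp (ipi - z) = -Complex.exp (-z) := by
      intro z
      rw [show ipi - z = ipi + -z by ring, Complex.exp_add, hipi]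
      ring
    have E2 : ∀ z : ℂ, Complex.exp (-(ipi - z)) = -Complex.exp z := by
      intro z
      rw [show -(ipi - z) = z - ipi by ring, Complex.exp_sub, hipi, div_neg, div_one]
    have E3 : ∀ z : ℂ, Complex.exp (2 * (ipi - z)) = Complex.exp (-z) * Complex.exp (-z) := by
      intro z
      rw [show (2 : ℂ) * (ipi - z) = (ipi + -z) + (ipi + -z) by ring, Complex.exp_add,
        Complex.exp_add, hipi]
      ring
    have E4 : ∀ z : ℂ, Complex.exp (2 * z) = Complex.exp z * Complex.exp z := by
      intro z; rw [two_mul, Complex.exp_add]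
    have E6 : ∀ z : ℂ, Complex.exp (2 * (1 - ell) * z) =
        Complex.exp z * Complex.exp z * Complex.exp (-(2 * ell) * z) := by
      intro z
      rw [← Complex.exp_add, ← Complex.exp_add]
      congr 1
      ring
    -- the difference functions
    set g1 : ℂ → ℂ := fun z => P (ipi - z) + c * Complex.exp (2 * (1 - ell) * z) * P z
      with hg1def
    set g2 : ℂ → ℂ := fun z => Q (ipi - z) - c * Complex.exp (-(2 * ell) * z) *
      (mu * P z + Complex.exp (2 * z) * R z) with hg2def
    set g3 : ℂ → ℂ := fun z => R (ipi - z) - c * Complex.exp (2 * (1 - ell) * z) *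
      (mu * Complex.exp (2 * z) * P z + Q z) with hg3def
    set g4 : ℂ → ℂ := fun z => S (ipi - z) + c * Complex.exp (-(2 * ell) * z) *
      (mu * (mu * Complex.exp (2 * z) * P z + Q z) +
        Complex.exp (2 * z) * (mu * Complex.exp (2 * z) * R z + S z)) with hg4def
    set M : ℂ → Matrix (Fin 4) (Fin 4) ℂ := fun z =>
      !![mu * Complex.exp z - (ell - 1), -Complex.exp z, Complex.exp (-z), 0;
         lam * Complex.exp (-z) + (ell + 1) * mu * Complex.exp (-z) * Complex.exp (-z),
           mu * Complex.exp (-z), 0, Complex.exp (-z);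
         -(lam + mu ^ 2) * Complex.exp z, 0, -(2 * (ell - 1) + mu * Complex.exp (-z)),
           -Complex.exp z;
         0, -(lam + mu ^ 2) * Complex.exp z,
           lam * Complex.exp (-z) + (ell + 1) * mu * Complex.exp (-z) * Complex.exp (-z),
           -((ell - 1) + mu * Complex.exp z)] with hMdef
    have hMcont : Continuous M := by
      refine continuous_matrix ?_
      intro i j
      fin_cases i <;> fin_cases j <;> simp [hMdef] <;> fun_prop
    have hentries : ∀ z : ℂ, M z 0 0 = mu * Complex.exp z - (ell - 1) ∧
        M z 0 1 = -Complex.exp z ∧ M z 0 2 = Complex.exp (-z) ∧ M z 0 3 = 0 ∧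
        M z 1 0 = lam * Complex.exp (-z) + (ell + 1) * mu * Complex.exp (-z) * Complex.exp (-z) ∧
        M z 1 1 = mu * Complex.exp (-z) ∧ M z 1 2 = 0 ∧ M z 1 3 = Complex.exp (-z) ∧
        M z 2 0 = -(lam + mu ^ 2) * Complex.exp z ∧ M z 2 1 = 0 ∧
        M z 2 2 = -(2 * (ell - 1) + mu * Complex.exp (-z)) ∧ M z 2 3 = -Complex.exp z ∧
        M z 3 0 = 0 ∧ M z 3 1 = -(lam + mu ^ 2) * Complex.exp z ∧
        M z 3 2 = lam * Complex.exp (-z) + (ell + 1) * mu * Complex.exp (-z) * Complex.exp (-z) ∧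
        M z 3 3 = -((ell - 1) + mu * Complex.exp z) := by
      intro z
      refine ⟨?_, ?_, ?_, ?_, ?_, ?_, ?_, ?_, ?_, ?_, ?_, ?_, ?_, ?_, ?_, ?_⟩ <;>
        simp [hMdef]
    -- the four derivative facts
    have hD1 : ∀ z : ℂ, HasDerivAt g1
        (M z 0 0 * g1 z + M z 0 1 * g2 z + M z 0 2 * g3 z + M z 0 3 * g4 z) z := by
      intro z
      refine ((dPσ z).add (((dE (2 * (1 - ell)) z).const_mul c).mul (dP z))).congr_deriv ?_
      obtain ⟨m00, m01, m02, m03, _⟩ := hentries z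
      rw [m00, m01, m02, m03, hg1def, hg2def, hg3def, hg4def]
      simp only
      simp only [E1, E2, E3, E4, E6]
      linear_combination (-1 : ℂ) * ((-1 : ℂ) * (P (ipi - z)) + (1 : ℂ) * (ell) * (P (ipi - z)) + (-1 : ℂ) * (Complex.exp (-z)) * (R (ipi - z)) + (-1 : ℂ) * (Complex.exp z) * (Complex.exp (-(2 * ell) * z)) * (c) * (mu) * (P z) + (1 : ℂ) * (Complex.exp z) * (Complex.exp z) * (Complex.exp (-(2 * ell) * z)) * (c) * (P z) + (-1 : ℂ) * (Complex.exp z) * (Complex.exp z) * (Complex.exp (-(2 * ell) * z)) * (c) * (ell) * (P z) + (-1 : ℂ) * (Complex.exp z) * (Complex.exp z) * (Complex.exp z) * (Complex.exp (-(2 * ell) * z)) * (c) * (R z) + (-1 : ℂ) * (Complex.exp z) * (Complex.exp z) * (Complex.exp z) * (Complex.exp (-(2 * ell) * z)) * (c) * (mu) * (P z)) * hXY z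
    have hD2 : ∀ z : ℂ, HasDerivAt g2
        (M z 1 0 * g1 z + M z 1 1 * g2 z + M z 1 2 * g3 z + M z 1 3 * g4 z) z := by
      intro z
      refine ((dQσ z).sub (((dE (-(2 * ell)) z).const_mul c).mul
        (((dP z).const_mul mu).add ((dE 2 z).mul (dR z))))).congr_deriv ?_
      obtain ⟨_, _, _, _, m10, m11, m12, m13, _⟩ := hentries z
      rw [m10, m11, m12, m13, hg1def, hg2def, hg3def, hg4def]
      simp only
      simp only [Pi.add_apply, Pi.mul_apply, E1, E2, E3, E4, E6]
      linear_combination (-1 : ℂ) * ((2 : ℂ) * (Complex.exp (-(2 * ell) * z)) * (c) * (mu) * (ell) * (P z) + (1 : ℂ) * (Complex.exp z) * (Complex.exp (-z)) * (Complex.exp (-(2 * ell) * z)) * (c) * (mu) * (P z) + (1 : ℂ) * (Complex.exp z) * (Complex.exp (-z)) * (Complex.exp (-(2 * ell) * z)) * (c) * (mu) * (ell) * (P z) + (-2 : ℂ) * (Complex.exp z) * (Complex.exp z) * (Complex.exp (-(2 * ell) * z)) * (c) * (R z) + (2 : ℂ) * (Complex.exp z) * (Complex.exp z) * (Complex.exp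 (-(2 * ell) * z)) * (c) * (ell) * (R z)) * hXY z
    have hD3 : ∀ z : ℂ, HasDerivAt g3
        (M z 2 0 * g1 z + M z 2 1 * g2 z + M z 2 2 * g3 z + M z 2 3 * g4 z) z := by
      intro z
      refine ((dRσ z).sub (((dE (2 * (1 - ell)) z).const_mul c).mul
        ((((dE 2 z).const_mul mu).mul (dP z)).add (dQ z)))).congr_deriv ?_
      obtain ⟨_, _, _, _, _, _, _, _, m20, m21, m22, m23, _⟩ := hentries z
      rw [m20, m21, m22, m23, hg1def, hg2def, hg3def, hg4def]
      simp only
      simp only [Pi.add_apply, Pi.mul_apply, E1, E2, E3, E4, E6]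
      linear_combination (-1 : ℂ) * ((-2 : ℂ) * (R (ipi - z)) + (2 : ℂ) * (ell) * (R (ipi - z)) + (1 : ℂ) * (Complex.exp (-z)) * (mu) * (R (ipi - z)) + (1 : ℂ) * (Complex.exp z) * (Complex.exp (-(2 * ell) * z)) * (c) * (mu) * (Q z) + (-1 : ℂ) * (Complex.exp z) * (Complex.exp z) * (Complex.exp z) * (Complex.exp (-(2 * ell) * z)) * (c) * (mu) * (Q z) + (2 : ℂ) * (Complex.exp z) * (Complex.exp z) * (Complex.exp z) * (Complex.exp (-(2 * ell) * z)) * (c) * (mu) * (mu) * (P z) + (-1 : ℂ) * (Complex.exp z) * (Complex.exp z) * (Complex.exp z) * (Complex.exp z) * (Complex.exp (-(2 * ell) * z)) * (c) * (mu) * (P z) + (1 : ℂ) * (Complex.exp z) * (Complex.exp z) * (Complex.exp z) * (Complex.exp z) * (Complex.exp (-(2 * ell) * z)) * (c) * (mu) * (ell) * (P z) + (1 : ℂ) * (Complex.exp z) * (Complex.exp z) * (Complex.exp z) * (Complex.exp z) * (Complex.exp z) * (Complex.exp (-(2 * ell) * z)) * (c) * (mu) * (R z)) * hXY z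
    have hD4 : ∀ z : ℂ, HasDerivAt g4
        (M z 3 0 * g1 z + M z 3 1 * g2 z + M z 3 2 * g3 z + M z 3 3 * g4 z) z := by
      intro z
      refine ((dSσ z).add (((dE (-(2 * ell)) z).const_mul c).mul
        (((((dE 2 z).const_mul mu).mul (dP z)).add (dQ z)).const_mul mu |>.add
          ((dE 2 z).mul (((((dE 2 z).const_mul mu).mul (dR z))).add (dS z)))))).congr_deriv ?_
      obtain ⟨_, _, _, _, _, _, _, _, _, _, _, _, m30, m31, m32, m33⟩ := hentries z
      rw [m30, m31, m32, m33, hg1def, hg2def, hg3def, hg4def]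
      simp only
      simp only [Pi.add_apply, Pi.mul_apply, E1, E2, E3, E4, E6]
      linear_combination (-1 : ℂ) * ((-1 : ℂ) * (S (ipi - z)) + (1 : ℂ) * (ell) * (S (ipi - z)) + (-1 : ℂ) * (Complex.exp (-(2 * ell) * z)) * (c) * (mu) * (Q z) + (-1 : ℂ) * (Complex.exp (-(2 * ell) * z)) * (c) * (mu) * (ell) * (Q z) + (-1 : ℂ) * (Complex.exp (-z)) * (lam) * (R (ipi - z)) + (-1 : ℂ) * (Complex.exp (-z)) * (Complex.exp (-z)) * (mu) * (R (ipi - z)) + (-1 : ℂ) * (Complex.exp (-z)) * (Complex.exp (-z)) * (mu) * (ell) * (R (ipi - z)) + (1 : ℂ) * (Complex.exp z) * (Complex.exp (-(2 * ell) * z)) * (c) * (mu) * (S z) + (2 : ℂ) * (Complex.exp z) * (Complex.exp (-(2 * ell) * z)) * (c) * (mu) * (mu) * (Q z) + (-1 : ℂ) * (Complex.exp z) * (Complex.exp (-(2 * ell) * z)) * (c) * (mu) * (mu) * (mu) * (P z) + (-1 : ℂ) * (Complex.exp z) * (Complex.exp (-z)) * (Complex.exp (-(2 * ell) * z)) * (c)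 * (mu) * (Q z) + (-1 : ℂ) * (Complex.exp z) * (Complex.exp (-z)) * (Complex.exp (-(2 * ell) * z)) * (c) * (mu) * (ell) * (Q z) + (1 : ℂ) * (Complex.exp z) * (Complex.exp z) * (Complex.exp (-(2 * ell) * z)) * (c) * (S z) + (-1 : ℂ) * (Complex.exp z) * (Complex.exp z) * (Complex.exp (-(2 * ell) * z)) * (c) * (ell) * (S z) + (-2 : ℂ) * (Complex.exp z) * (Complex.exp z) * (Complex.exp (-(2 * ell) * z)) * (c) * (mu) * (mu) * (ell) * (P z) + (-1 : ℂ) * (Complex.exp z) * (Complex.exp z) * (Complex.exp z) * (Complex.exp (-(2 * ell) * z)) * (c) * (lam) * (R z) + (1 : ℂ) * (Complex.exp z) * (Complex.exp z) * (Complex.exp z) * (Complex.exp (-(2 * ell) * z)) * (c) * (mu) * (S z) + (-1 : ℂ) * (Complex.exp z) * (Complex.exp z) * (Complex.exp z) * (Complex.exp (-(2 * ell) * z)) * (c) * (mu) * (mu) * (R z) + (1 : ℂ) * (Complex.exp z) * (Complex.exp z) * (Complex.exp z) * (Complex.exp (-(2 * ell) * z)) * (c) * (mu) * (mu) * (mu)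 * (P z) + (-1 : ℂ) * (Complex.exp z) * (Complex.exp z) * (Complex.exp z) * (Complex.exp (-z)) * (Complex.exp (-(2 * ell) * z)) * (c) * (mu) * (mu) * (P z) + (-1 : ℂ) * (Complex.exp z) * (Complex.exp z) * (Complex.exp z) * (Complex.exp (-z)) * (Complex.exp (-(2 * ell) * z)) * (c) * (mu) * (mu) * (ell) * (P z) + (3 : ℂ) * (Complex.exp z) * (Complex.exp z) * (Complex.exp z) * (Complex.exp z) * (Complex.exp (-(2 * ell) * z)) * (c) * (mu) * (R z) + (-1 : ℂ) * (Complex.exp z) * (Complex.exp z) * (Complex.exp z) * (Complex.exp z) * (Complex.exp (-(2 * ell) * z)) * (c) * (mu) * (ell) * (R z) + (1 : ℂ) * (Complex.exp z) * (Complex.exp z) * (Complex.exp z) * (Complex.exp z) * (Complex.exp z) * (Complex.exp (-(2 * ell) * z)) * (c) * (mu) * (mu) * (R z)) * hXY z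
    -- initial conditions at ipi/2
    have i1 : g1 (ipi / 2) = 0 := by
      rw [hg1def]
      simp only
      rw [hfix]
      linear_combination P (ipi / 2) * hm1
    have i2 : g2 (ipi / 2) = 0 := by
      rw [hg2def]
      simp only
      rw [hfix, hdub, hipi]
      linear_combination hcon - (mu * P (ipi / 2) - R (ipi / 2)) * h1
    have i3 : g3 (ipi / 2) = 0 := by
      rw [hg3def]
      simp only
      rw [hfix, hdub, hipi]
      linear_combination hcon - (-(mu * P (ipi / 2)) + Q (ipi / 2)) * hm1
    have i4 : g4 (ipi / 2) = 0 := by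
      rw [hg4def]
      simp only
      rw [hfix, hdub, hipi]
      linear_combination mu * hcon +
        (mu * (mu * (-1) * P (ipi / 2) + Q (ipi / 2)) +
          (-1) * (mu * (-1) * R (ipi / 2) + S (ipi / 2))) * h1
    intro w
    obtain ⟨z1, z2, z3, z4⟩ :=
      quad_vanish g1 g2 g3 g4 M hMcont hD1 hD2 hD3 hD4 (ipi / 2) i1 i2 i3 i4 w
    rw [hg1def] at z1
    rw [hg2def] at z2
    rw [hg3def] at z3
    rw [hg4def] at z4
    simp only at z1 z2 z3 z4
    exact ⟨by linear_combination z1, by linear_combination z2,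
      by linear_combination z3, by linear_combination z4⟩
  · -- reverse: the A-relations imply the constraint
    intro h
    obtain ⟨_, hA2, _, _⟩ := h (ipi / 2)
    rw [hfix, hdub, hipi] at hA2
    linear_combination hA2 + (mu * P (ipi / 2) - R (ipi / 2)) * h1
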